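/- arXiv:1407.5433 — 2 statements merged into one kernel-verified Lean document; each statement's English description precedes it below -/
import Mathlib

section
/- The coefficient of q^{3n+2} in the formal power series expansion of 1/ψ(q)^8 is divisible by 9, for every n ≥ 0. -/
open PowerSeries

/-- Coefficientwise: `(q^j; q^j)_∞`, the Euler product with `q` replaced by `q^j`. -/
noncomputable def eulerSub (j : ℕ) : PowerSeries ℤ :=
  PowerSeries.mk fun n =>
    PowerSeries.coeff n (∏ k ∈ Finset.range (n + 1), (1 - PowerSeries.X ^ (j * (k + 1))))

open scoped Classical in
/-- `ψ(q^j)` where `ψ(q) = Σ_{k≥0} q^{k(k+1)/2}`. -/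
noncomputable def psiSub (j : ℕ) : PowerSeries ℤ :=
  PowerSeries.mk fun n => if ∃ k, j * (k * (k + 1) / 2) = n then 1 else 0

/-- `A(q^j)` where `A(q) = (q^2;q^2)_∞ (q^3;q^3)_∞^2 / ((q;q)_∞ (q^6;q^6)_∞)`. -/
noncomputable def ASub (j : ℕ) : PowerSeries ℤ :=
  eulerSub (2 * j) * eulerSub (3 * j) ^ 2 *
    PowerSeries.invOfUnit (eulerSub j * eulerSub (6 * j)) 1

/-- `ψ(-q)`. -/
noncomputable def psiNeg : PowerSeries ℤ :=
  PowerSeries.mk fun n => (-1) ^ n * PowerSeries.coeff n (psiSub 1)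

/-- `pod_{-3}(n)`, defined by `Σ pod_{-3}(n) q^n = 1/ψ(-q)^3`. -/
noncomputable def pod3 (n : ℕ) : ℤ :=
  PowerSeries.coeff n (PowerSeries.invOfUnit (psiNeg ^ 3) 1)

/-- `pod(n) = pod_{-1}(n)`, defined by `Σ pod(n) q^n = 1/ψ(-q)`. -/
noncomputable def pod1 (n : ℕ) : ℤ :=
  PowerSeries.coeff n (PowerSeries.invOfUnit psiNeg 1)

/-- `t_k(n)`: number of ordered `k`-tuples of triangular numbers summing to `n`. -/
noncomputable def triRep (k n : ℕ) : ℕ :=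
  Set.ncard {v : Fin k → ℕ | (∀ i, ∃ m, m * (m + 1) / 2 = v i) ∧ ∑ i, v i = n}

/-- `r_k(n)`: number of representations of `n` as an ordered sum of `k` squares. -/
noncomputable def sqRep (k n : ℕ) : ℕ :=
  Set.ncard {x : Fin k → ℤ | ∑ i, (x i) ^ 2 = (n : ℤ)}


lemma tri_mod_three {k m : ℕ} (h : k * (k + 1) / 2 = m) : m % 3 ≠ 2 := by
  intro hm
  have h2 : 2 * m = k * (k + 1) := by
    have he : 2 ∣ k * (k + 1) := (Nat.even_mul_succ_self k).two_dvd
    omega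
  have hc : ((2 * m : ℕ) : ZMod 3) = (k : ZMod 3) * ((k : ZMod 3) + 1) := by
    rw [h2]; push_cast; ring
  have hm3 : ((m : ℕ) : ZMod 3) = 2 := by
    have : m = 3 * (m / 3) + 2 := by omega
    rw [this]; push_cast
    rw [show (3:ZMod 3) = 0 from by decide]
    ring
  have : ∀ x : ZMod 3, x * (x + 1) ≠ 2 * 2 := by decide
  apply this (k : ZMod 3)
  rw [← hc]; push_cast [hm3]
  -- leftover trivial
  rfl

/-- Rotation of a 9-tuple. -/
def rot (g : Fin 9) (v : Fin 9 → ℕ) : Fin 9 → ℕ := fun i => v (i + g)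

lemma rot_rot (g h : Fin 9) (v : Fin 9 → ℕ) : rot h (rot g v) = rot (g + h) v := by
  funext i; simp only [rot]; congr 1; rw [add_assoc, add_comm h g]

lemma rot_zero (v : Fin 9 → ℕ) : rot 0 v = v := by funext i; simp [rot]

lemma rot_free {v : Fin 9 → ℕ} {m : ℕ} (hm : ¬ 3 ∣ m) (hs : ∑ i, v i = m)
    {c : Fin 9} (hc : ∀ i, v (i + c) = v i) : c = 0 := by
  by_contra h0
  obtain ⟨k, hk⟩ : ∃ k : Fin 9, (k.val • c : Fin 9) = 3 := by
    have : ∀ c : Fin 9, c ≠ 0 → ∃ k : Fin 9, (k.val • c : Fin 9) = 3 := by decide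
    exact this c h0
  have hiter : ∀ (t : ℕ) (i : Fin 9), v (i + t • c) = v i := by
    intro t
    induction t with
    | zero => simp
    | succ t ih => intro i; rw [succ_nsmul, ← add_assoc, hc, ih]
  have h3 : ∀ i : Fin 9, v (i + 3) = v i := fun i => by rw [← hk]; exact hiter k.val i
  have e3 : v 3 = v 0 := by have := h3 0; rwa [show (0 : Fin 9) + 3 = 3 from by decide] at this
  have e4 : v 4 = v 1 := by have := h3 1; rwa [show (1 : Fin 9) + 3 = 4 from by decide] at this
  have e5 : v 5 = v 2 := by have := h3 2; rwa [show (2 : Fin 9) + 3 = 5 from by decide] at this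
  have e6 : v 6 = v 0 := by
    have := h3 3; rw [show (3 : Fin 9) + 3 = 6 from by decide] at this; rw [this, e3]
  have e7 : v 7 = v 1 := by
    have := h3 4; rw [show (4 : Fin 9) + 3 = 7 from by decide] at this; rw [this, e4]
  have e8 : v 8 = v 2 := by
    have := h3 5; rw [show (5 : Fin 9) + 3 = 8 from by decide] at this; rw [this, e5]
  apply hm
  refine ⟨v 0 + v 1 + v 2, ?_⟩
  rw [← hs]
  rw [show (∑ i : Fin 9, v i) = v 0 + v 1 + v 2 + v 3 + v 4 + v 5 + v 6 + v 7 + v 8 from by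
    rw [Fin.sum_univ_castSucc, Fin.sum_univ_eight]
    simp only [show Fin.castSucc (0:Fin 8) = (0:Fin 9) from by decide,
      show Fin.castSucc (1:Fin 8) = (1:Fin 9) from by decide,
      show Fin.castSucc (2:Fin 8) = (2:Fin 9) from by decide,
      show Fin.castSucc (3:Fin 8) = (3:Fin 9) from by decide,
      show Fin.castSucc (4:Fin 8) = (4:Fin 9) from by decide,
      show Fin.castSucc (5:Fin 8) = (5:Fin 9) from by decide,
      show Fin.castSucc (6:Fin 8) = (6:Fin 9) from by decide,
      show Fin.castSucc (7:Fin 8) = (7:Fin 9) from by decide,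
      show Fin.last 8 = (8:Fin 9) from by decide]]
  rw [e3, e4, e5, e6, e7, e8]; ring

lemma nine_dvd_card_of_rotInvariant :
    ∀ (N m : ℕ), ¬ 3 ∣ m → ∀ B : Finset (Fin 9 → ℕ), B.card ≤ N →
      (∀ v ∈ B, ∑ i, v i = m) → (∀ v ∈ B, ∀ g, rot g v ∈ B) → 9 ∣ B.card := by
  intro N
  induction N with
  | zero =>
    intro m hm B hB _ _
    interval_cases h : B.card
    · simp
  | succ N ih =>
    intro m hm B hBcard hsum hrot
    rcases B.eq_empty_or_nonempty with rfl | ⟨v, hv⟩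
    · simp
    have hinj : Function.Injective (fun g : Fin 9 => rot g v) := by
      intro g g' hgg'
      have hper : ∀ j : Fin 9, v (j + (g - g')) = v j := by
        intro j
        have h1 : rot g v (j - g') = rot g' v (j - g') := congrFun hgg' (j - g')
        simp only [rot] at h1
        rw [show j - g' + g = j + (g - g') from by abel, show j - g' + g' = j from by abel] at h1
        exact h1
      have h0 : g - g' = 0 := rot_free hm (hsum v hv) hper
      exact sub_eq_zero.mp h0
    classical
    set O : Finset (Fin 9 → ℕ) := Finset.univ.image (fun g => rot g v) with hO
    have hOcard : O.card = 9 := by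
      rw [hO, Finset.card_image_of_injective _ hinj, Finset.card_univ, Fintype.card_fin]
    have hOsub : O ⊆ B := by
      intro w hw
      rw [hO, Finset.mem_image] at hw
      obtain ⟨g, _, rfl⟩ := hw
      exact hrot v hv g
    have hmemO : ∀ w ∈ O, ∀ g : Fin 9, rot g w ∈ O := by
      intro w hw g
      rw [hO, Finset.mem_image] at hw ⊢
      obtain ⟨h, _, rfl⟩ := hw
      exact ⟨h + g, Finset.mem_univ _, (rot_rot h g v).symm⟩
    have hrot' : ∀ w ∈ B \ O, ∀ g, rot g w ∈ B \ O := by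
      intro w hw g
      rw [Finset.mem_sdiff] at hw ⊢
      refine ⟨hrot w hw.1 g, fun hmem => hw.2 ?_⟩
      have : rot (-g) (rot g w) ∈ O := hmemO _ hmem _
      rwa [rot_rot, add_neg_cancel, rot_zero] at this
    have hsum' : ∀ w ∈ B \ O, ∑ i, w i = m := fun w hw => hsum w (Finset.mem_sdiff.mp hw).1
    have hcard' : (B \ O).card = B.card - 9 := by rw [Finset.card_sdiff_of_subset hOsub, hOcard]
    have h9 : 9 ≤ B.card := by
      have := Finset.card_le_card hOsub
      omega
    have hle : (B \ O).card ≤ N := by omega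
    obtain ⟨t, ht⟩ := ih m hm (B \ O) hle hsum' hrot'
    exact ⟨t + 1, by omega⟩

lemma nine_dvd_coeff_psi_pow_nine {m : ℕ} (hm : ¬ 3 ∣ m) :
    (9 : ℤ) ∣ PowerSeries.coeff m (psiSub 1 ^ 9) := by
  classical
  rw [PowerSeries.coeff_pow]
  have hcong : ∀ l ∈ Finset.finsuppAntidiag (Finset.range 9) m,
      (∏ i ∈ Finset.range 9, PowerSeries.coeff (l i) (psiSub 1))
      = if (∀ i ∈ Finset.range 9, ∃ k, 1 * (k * (k + 1) / 2) = l i) then (1:ℤ) else 0 := by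
    intro l _
    rw [← Finset.prod_boole]
    refine Finset.prod_congr rfl fun i _ => ?_
    simp only [psiSub, PowerSeries.coeff_mk]
  rw [Finset.sum_congr rfl hcong, Finset.sum_boole]
  set A := (Finset.finsuppAntidiag (Finset.range 9) m).filter
    (fun l => ∀ i ∈ Finset.range 9, ∃ k, 1 * (k * (k + 1) / 2) = l i) with hA
  suffices h : 9 ∣ A.card by exact_mod_cast Int.natCast_dvd_natCast.mpr h
  -- transfer to tuples
  set res : (ℕ →₀ ℕ) → (Fin 9 → ℕ) := fun l i => l i.val with hres
  have hsupp : ∀ l ∈ A, (l : ℕ →₀ ℕ).support ⊆ Finset.range 9 := by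
    intro l hl
    rw [hA, Finset.mem_filter, Finset.mem_finsuppAntidiag] at hl
    exact hl.1.2
  have hinjOn : Set.InjOn res A := by
    intro l1 h1 l2 h2 hres12
    ext j
    by_cases hj : j < 9
    · exact congrFun hres12 ⟨j, hj⟩
    · have z1 : l1 j = 0 := by
        by_contra hz
        exact hj (Finset.mem_range.mp (hsupp l1 h1 (Finsupp.mem_support_iff.mpr hz)))
      have z2 : l2 j = 0 := by
        by_contra hz
        exact hj (Finset.mem_range.mp (hsupp l2 h2 (Finsupp.mem_support_iff.mpr hz)))
      rw [z1, z2]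
  set B := A.image res with hB
  have hcardAB : A.card = B.card := (Finset.card_image_of_injOn hinjOn).symm
  rw [hcardAB]
  -- properties of B
  have hsumB : ∀ v ∈ B, ∑ i, v i = m := by
    intro v hv
    rw [hB, Finset.mem_image] at hv
    obtain ⟨l, hl, rfl⟩ := hv
    rw [hA, Finset.mem_filter, Finset.mem_finsuppAntidiag] at hl
    rw [show (∑ i, res l i) = ∑ i ∈ Finset.range 9, l i from
      Fin.sum_univ_eq_sum_range (fun j => l j) 9]
    exact hl.1.1
  have htriB : ∀ v ∈ B, ∀ i : Fin 9, ∃ k, 1 * (k * (k + 1) / 2) = v i := by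
    intro v hv i
    rw [hB, Finset.mem_image] at hv
    obtain ⟨l, hl, rfl⟩ := hv
    rw [hA, Finset.mem_filter] at hl
    exact hl.2 i.val (Finset.mem_range.mpr i.isLt)
  have hrotB : ∀ v ∈ B, ∀ g, rot g v ∈ B := by
    intro v hv g
    have hsv := hsumB v hv
    have htv := htriB v hv
    rw [hB, Finset.mem_image] at hv ⊢
    obtain ⟨l, hl, hlv⟩ := hv
    set f : ℕ → ℕ := fun j => if h : j < 9 then rot g v ⟨j, h⟩ else 0 with hf
    have hfsupp : ∀ a, f a ≠ 0 → a ∈ Finset.range 9 := by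
      intro a ha
      rw [Finset.mem_range]
      by_contra hc
      rw [hf] at ha
      simp only [dif_neg hc] at ha
      exact ha rfl
    refine ⟨Finsupp.onFinset (Finset.range 9) f hfsupp, ?_, ?_⟩
    · rw [hA, Finset.mem_filter, Finset.mem_finsuppAntidiag]
      refine ⟨⟨?_, Finsupp.support_onFinset_subset⟩, ?_⟩
      · rw [show (∑ i ∈ Finset.range 9, (Finsupp.onFinset (Finset.range 9) f hfsupp) i)
            = ∑ i : Fin 9, (Finsupp.onFinset (Finset.range 9) f hfsupp) i.val from
          (Fin.sum_univ_eq_sum_range (fun j => (Finsupp.onFinset (Finset.range 9) f hfsupp) j) 9).symm]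
        have heq : ∀ i : Fin 9, (Finsupp.onFinset (Finset.range 9) f hfsupp) i.val = v (i + g) := by
          intro i
          rw [Finsupp.onFinset_apply, hf]
          simp only [dif_pos i.isLt, Fin.eta]
          rfl
        rw [Finset.sum_congr rfl fun i _ => heq i]
        rw [show (∑ i : Fin 9, v (i + g)) = ∑ i, v i from Equiv.sum_comp (Equiv.addRight g) v]
        exact hsv
      · intro i hi
        have hi9 := Finset.mem_range.mp hi
        rw [Finsupp.onFinset_apply]
        simp only [hf, dif_pos hi9]
        exact htv _
    · funext i
      rw [hres]
      simp only [Finsupp.onFinset_apply, hf, dif_pos i.isLt, Fin.eta]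
  exact nine_dvd_card_of_rotInvariant B.card m hm B le_rfl hsumB hrotB

theorem psi_inv_eight_coeff_div_nine (n : ℕ) :
    (9 : ℤ) ∣ PowerSeries.coeff (3 * n + 2) (PowerSeries.invOfUnit (psiSub 1 ^ 8) 1) := by
  classical
  set B := PowerSeries.invOfUnit (psiSub 1 ^ 8) 1 with hBdef
  have hcψ : PowerSeries.constantCoeff (psiSub 1) = 1 := by
    rw [psiSub, PowerSeries.constantCoeff_mk, if_pos ⟨0, by norm_num⟩]
  have hconst : PowerSeries.constantCoeff (psiSub 1 ^ 8) = ((1 : ℤˣ) : ℤ) := by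
    rw [map_pow, hcψ]; norm_num
  have hmul : psiSub 1 ^ 8 * B = 1 := PowerSeries.mul_invOfUnit _ _ hconst
  have hmul9 : psiSub 1 ^ 9 * B = psiSub 1 := by
    calc psiSub 1 ^ 9 * B = psiSub 1 * (psiSub 1 ^ 8 * B) := by ring
    _ = psiSub 1 := by rw [hmul, mul_one]
  have hc0 : PowerSeries.coeff 0 (psiSub 1 ^ 9) = 1 := by
    rw [PowerSeries.coeff_zero_eq_constantCoeff, map_pow, hcψ]; norm_num
  induction n using Nat.strong_induction_on with
  | _ n ih =>
    have hcoeff : PowerSeries.coeff (3 * n + 2) (psiSub 1 ^ 9 * B) = 0 := by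
      rw [hmul9, psiSub, PowerSeries.coeff_mk, if_neg]
      rintro ⟨k, hk⟩
      exact tri_mod_three (k := k) (m := 3 * n + 2) (by omega) (by omega)
    rw [PowerSeries.coeff_mul] at hcoeff
    have hmem : ((0 : ℕ), 3 * n + 2) ∈ Finset.HasAntidiagonal.antidiagonal (3 * n + 2) := by simp
    rw [← Finset.sum_erase_add _ _ hmem] at hcoeff
    rw [hc0, one_mul] at hcoeff
    have hsum : (9 : ℤ) ∣ ∑ p ∈ (Finset.HasAntidiagonal.antidiagonal (3 * n + 2)).erase (0, 3 * n + 2),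
        PowerSeries.coeff p.1 (psiSub 1 ^ 9) * PowerSeries.coeff p.2 B := by
      refine Finset.dvd_sum fun p hp => ?_
      have hpmem := Finset.mem_of_mem_erase hp
      rw [Finset.HasAntidiagonal.mem_antidiagonal] at hpmem
      have hpne := Finset.ne_of_mem_erase hp
      by_cases h3 : 3 ∣ p.1
      · have hp1ne : p.1 ≠ 0 := by
          intro h0
          exact hpne (Prod.ext h0 (by omega))
        obtain ⟨n', hn', hn'lt⟩ : ∃ n', p.2 = 3 * n' + 2 ∧ n' < n := by
          obtain ⟨a, ha⟩ := h3
          exact ⟨n - a, by omega, by omega⟩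
        rw [hn']
        exact dvd_mul_of_dvd_right (ih n' hn'lt) _
      · exact dvd_mul_of_dvd_left (nine_dvd_coeff_psi_pow_nine h3) _
    have hEq : PowerSeries.coeff (3 * n + 2) B
        = -(∑ p ∈ (Finset.HasAntidiagonal.antidiagonal (3 * n + 2)).erase (0, 3 * n + 2),
            PowerSeries.coeff p.1 (psiSub 1 ^ 9) * PowerSeries.coeff p.2 B) := by
      linarith
    rw [hEq]
    exact dvd_neg.mpr hsum
end

section
/- For all integers n ≥ 0, pod_{-3}(3n+2) ≡ 6 pod(9n+5) (mod 9), where pod(n) = pod_{-1}(n). -/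
open PowerSeries

namespace PodAux

variable {R : Type*} [CommRing R]


variable {R : Type*} [CommRing R]

/-- substitution q ↦ q³ -/
noncomputable def sg (f : PowerSeries R) : PowerSeries R :=
  PowerSeries.mk fun n => if 3 ∣ n then PowerSeries.coeff (n / 3) f else 0

/-- extract arithmetic progression: T r f = Σ (coeff (3n+r) f) qⁿ -/
noncomputable def T (r : ℕ) (f : PowerSeries R) : PowerSeries R :=
  PowerSeries.mk fun n => PowerSeries.coeff (3 * n + r) f

lemma coeff_sg (n : ℕ) (f : PowerSeries R) :
    coeff n (sg f) = if 3 ∣ n then coeff (n / 3) f else 0 := coeff_mk _ _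

lemma coeff_sg_mul3 (n : ℕ) (f : PowerSeries R) :
    coeff (3 * n) (sg f) = coeff n f := by
  rw [coeff_sg, if_pos ⟨n, rfl⟩, Nat.mul_div_cancel_left _ (by norm_num)]

lemma coeff_T (r n : ℕ) (f : PowerSeries R) :
    coeff n (T r f) = coeff (3 * n + r) f := coeff_mk _ _

lemma sg_add (f g : PowerSeries R) : sg (f + g) = sg f + sg g := by
  ext n; simp only [coeff_sg, map_add]; split_ifs <;> simp

lemma sg_sub (f g : PowerSeries R) : sg (f - g) = sg f - sg g := by
  ext n; simp only [coeff_sg, map_sub]; split_ifs <;> simp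

lemma sg_one : sg (1 : PowerSeries R) = 1 := by
  ext n
  rw [coeff_sg, PowerSeries.coeff_one, PowerSeries.coeff_one]
  rcases Nat.eq_zero_or_pos n with h | h
  · subst h; norm_num
  · split_ifs with h1 h2 h3 <;> first | rfl | omega

lemma sg_mul (f g : PowerSeries R) : sg (f * g) = sg f * sg g := by
  ext n
  rw [coeff_sg]
  by_cases h3 : 3 ∣ n
  · obtain ⟨m, rfl⟩ := h3
    rw [if_pos ⟨m, rfl⟩, Nat.mul_div_cancel_left _ (by norm_num), PowerSeries.coeff_mul,
      PowerSeries.coeff_mul]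
    rw [← Finset.sum_subset (f := fun p => coeff p.1 (sg f) * coeff p.2 (sg g))
        (s₁ := (Finset.HasAntidiagonal.antidiagonal m).image (fun q => (3 * q.1, 3 * q.2))) ?_ ?_]
    · rw [Finset.sum_image ?_]
      · apply Finset.sum_congr rfl
        intro p _
        rw [coeff_sg, coeff_sg, if_pos ⟨p.1, rfl⟩, if_pos ⟨p.2, rfl⟩,
          Nat.mul_div_cancel_left _ (by norm_num), Nat.mul_div_cancel_left _ (by norm_num)]
      · intro a _ b _ hab
        have h1 := congrArg Prod.fst hab
        have h2 := congrArg Prod.snd hab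
        simp only at h1 h2
        ext <;> omega
    · intro p hp
      simp only [Finset.mem_image, Finset.HasAntidiagonal.mem_antidiagonal] at hp ⊢
      obtain ⟨q, hq, rfl⟩ := hp
      omega
    · intro p hp hnot
      simp only [Finset.mem_image, Finset.HasAntidiagonal.mem_antidiagonal, Prod.ext_iff] at hp hnot
      rw [coeff_sg, coeff_sg]
      by_cases h1 : 3 ∣ p.1
      · by_cases h2 : 3 ∣ p.2
        · exfalso
          obtain ⟨a, ha⟩ := h1
          obtain ⟨b, hb⟩ := h2
          exact hnot ⟨(a, b), by omega, by omega, by omega⟩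
        · rw [if_neg h2, mul_zero]
      · rw [if_neg h1, zero_mul]
  · rw [if_neg h3, PowerSeries.coeff_mul]
    refine (Finset.sum_eq_zero fun p hp => ?_).symm
    rw [Finset.HasAntidiagonal.mem_antidiagonal] at hp
    rw [coeff_sg, coeff_sg]
    by_cases h1 : 3 ∣ p.1
    · rw [if_neg (show ¬ 3 ∣ p.2 by omega), mul_zero]
    · rw [if_neg h1, zero_mul]

lemma sg_pow (f : PowerSeries R) (k : ℕ) : sg (f ^ k) = (sg f) ^ k := by
  induction k with
  | zero => simpa using sg_one
  | succ k ih => rw [pow_succ, pow_succ, sg_mul, ih]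

lemma sg_C (a : R) : sg (C a) = C a := by
  ext n
  rw [coeff_sg, coeff_C, coeff_C]
  split_ifs with h1 h2 h3 h4 <;> first | rfl | omega

lemma sg_X_mul (f : PowerSeries R) : sg (X * f) = X ^ 3 * sg f := by
  ext n
  rw [coeff_sg, coeff_X_pow_mul']
  by_cases h1 : 3 ∣ n
  · obtain ⟨m, rfl⟩ := h1
    rw [if_pos ⟨m, rfl⟩, Nat.mul_div_cancel_left _ (by norm_num)]
    cases m with
    | zero => simp
    | succ l =>
      rw [coeff_succ_X_mul, if_pos (by omega), show 3 * (l + 1) - 3 = 3 * l by omega,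
        coeff_sg_mul3]
  · rw [if_neg h1]
    by_cases h2 : 3 ≤ n
    · rw [if_pos h2, coeff_sg, if_neg (show ¬ (3 ∣ n - 3) by omega)]
    · rw [if_neg h2]

lemma sg_map {S : Type*} [CommRing S] (h : R →+* S) (f : PowerSeries R) :
    PowerSeries.map h (sg f) = sg (PowerSeries.map h f) := by
  ext n
  rw [coeff_map, coeff_sg, coeff_sg]
  split_ifs
  · rw [coeff_map]
  · exact map_zero h

lemma T_add (r : ℕ) (f g : PowerSeries R) : T r (f + g) = T r f + T r g := by
  ext n; simp only [coeff_T, map_add]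

lemma T_sub (r : ℕ) (f g : PowerSeries R) : T r (f - g) = T r f - T r g := by
  ext n; simp only [coeff_T, map_sub]

lemma T_map {S : Type*} [CommRing S] (h : R →+* S) (r : ℕ) (f : PowerSeries R) :
    PowerSeries.map h (T r f) = T r (PowerSeries.map h f) := by
  ext n; rw [coeff_map, coeff_T, coeff_T, coeff_map]

lemma T_C_mul (r : ℕ) (a : R) (f : PowerSeries R) :
    T r (C a * f) = C a * T r f := by
  ext n; rw [coeff_T, coeff_C_mul, coeff_C_mul, coeff_T]

lemma T_X_pow_sg (r s : ℕ) (hr : r < 3) (Z : PowerSeries R) :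
    T r (X ^ s * sg Z) = if s % 3 = r then X ^ (s / 3) * Z else 0 := by
  ext n
  rw [coeff_T, coeff_X_pow_mul']
  by_cases hs : s % 3 = r
  · rw [if_pos hs, coeff_X_pow_mul']
    by_cases h1 : s ≤ 3 * n + r
    · rw [if_pos h1, coeff_sg, if_pos (show (3:ℕ) ∣ 3 * n + r - s by omega),
        if_pos (show s / 3 ≤ n by omega), show (3 * n + r - s) / 3 = n - s / 3 by omega]
    · rw [if_neg h1, if_neg (show ¬ (s / 3 ≤ n) by omega)]
  · rw [if_neg hs]
    by_cases h1 : s ≤ 3 * n + r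
    · rw [if_pos h1, coeff_sg, if_neg (show ¬ ((3:ℕ) ∣ 3 * n + r - s) by omega), map_zero]
    · rw [if_neg h1, map_zero]

lemma T1_sg (Z : PowerSeries R) : T 1 (sg Z) = 0 := by
  have := T_X_pow_sg (R := R) 1 0 (by norm_num) Z
  simpa using this

lemma T1_X_sg (Z : PowerSeries R) : T 1 (X * sg Z) = Z := by
  have := T_X_pow_sg (R := R) 1 1 (by norm_num) Z
  simpa using this

lemma T1_X2_sg (Z : PowerSeries R) : T 1 (X ^ 2 * sg Z) = 0 := by
  have := T_X_pow_sg (R := R) 1 2 (by norm_num) Z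
  simpa using this

lemma T2_sg (Z : PowerSeries R) : T 2 (sg Z) = 0 := by
  have := T_X_pow_sg (R := R) 2 0 (by norm_num) Z
  simpa using this

lemma T2_X_sg (Z : PowerSeries R) : T 2 (X * sg Z) = 0 := by
  have := T_X_pow_sg (R := R) 2 1 (by norm_num) Z
  simpa using this

lemma T2_X2_sg (Z : PowerSeries R) : T 2 (X ^ 2 * sg Z) = Z := by
  have := T_X_pow_sg (R := R) 2 2 (by norm_num) Z
  simpa using this

lemma T2_X3_sg (Z : PowerSeries R) : T 2 (X ^ 3 * sg Z) = 0 := by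
  have := T_X_pow_sg (R := R) 2 3 (by norm_num) Z
  simpa using this

lemma T2_X4_sg (Z : PowerSeries R) : T 2 (X ^ 4 * sg Z) = 0 := by
  have := T_X_pow_sg (R := R) 2 4 (by norm_num) Z
  simpa using this

lemma T2_X5_sg (Z : PowerSeries R) : T 2 (X ^ 5 * sg Z) = X * Z := by
  have := T_X_pow_sg (R := R) 2 5 (by norm_num) Z
  simpa [pow_one] using this

lemma T2_X6_sg (Z : PowerSeries R) : T 2 (X ^ 6 * sg Z) = 0 := by
  have := T_X_pow_sg (R := R) 2 6 (by norm_num) Z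
  simpa using this

noncomputable def tail (f : PowerSeries R) : PowerSeries R :=
  PowerSeries.mk fun n => coeff (n + 1) f

lemma eq_C_add_X_mul_tail (f : PowerSeries R) :
    f = C (constantCoeff f) + X * tail f := by
  ext n
  cases n with
  | zero =>
    simp [coeff_zero_eq_constantCoeff]
  | succ k =>
    rw [map_add, coeff_succ_X_mul, coeff_C, if_neg (by omega), zero_add, tail, coeff_mk]

lemma three_eq_zero : (3 : PowerSeries (ZMod 3)) = 0 := by
  rw [← map_ofNat (C (R := ZMod 3)) 3, show (3 : ZMod 3) = 0 by decide, map_zero]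

lemma frob_coeff (n : ℕ) (f : PowerSeries (ZMod 3)) :
    coeff n (f ^ 3) = coeff n (sg f) := by
  induction n using Nat.strong_induction_on generalizing f with
  | _ n ih =>
    obtain ⟨a, t, hft⟩ : ∃ a t, f = C a + X * t :=
      ⟨_, _, eq_C_add_X_mul_tail f⟩
    have h3 := three_eq_zero
    have hcube : f ^ 3 = C (a ^ 3) + X ^ 3 * t ^ 3 := by
      rw [hft, map_pow]
      linear_combination ((C a) ^ 2 * (X * t) + C a * (X * t) ^ 2) * h3
    have hsg : sg f = C a + X ^ 3 * sg t := by
      rw [hft, sg_add, sg_C, sg_X_mul]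
    rw [hcube, hsg, map_add, map_add]
    congr 1
    · rw [coeff_C, coeff_C]
      split_ifs with h
      · exact congrArg _ ((by decide : ∀ a : ZMod 3, a ^ 3 = a) a) |>.mp rfl ▸
          ((by decide : ∀ a : ZMod 3, a ^ 3 = a) a)
      · rfl
    · rw [coeff_X_pow_mul', coeff_X_pow_mul']
      split_ifs with h
      · exact ih (n - 3) (by omega) t
      · rfl

lemma frob (f : PowerSeries (ZMod 3)) : f ^ 3 = sg f := by
  ext n; exact frob_coeff n f



lemma two_mul_tri (k : ℕ) : 2 * (k * (k + 1) / 2) = k * (k + 1) :=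
  Nat.mul_div_cancel' ((Nat.even_mul_succ_self k).two_dvd) |>.symm ▸
    (Nat.mul_div_cancel' ((Nat.even_mul_succ_self k).two_dvd))

lemma tri_ne_two_mod3 (k m : ℕ) (h : k * (k + 1) / 2 = 3 * m + 2) : False := by
  have h2 : k * (k + 1) = 2 * (3 * m + 2) := by rw [← h, two_mul_tri]
  rcases (by omega : k % 3 = 0 ∨ k % 3 = 1 ∨ k % 3 = 2) with h0 | h0 | h0
  · obtain ⟨q, rfl⟩ : ∃ q, k = 3 * q := ⟨k / 3, by omega⟩
    have hexp : 3 * q * (3 * q + 1) = 9 * (q * q) + 3 * q := by ring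
    rw [hexp] at h2
    generalize q * q = Q at h2
    omega
  · obtain ⟨q, rfl⟩ : ∃ q, k = 3 * q + 1 := ⟨k / 3, by omega⟩
    have hexp : (3 * q + 1) * (3 * q + 1 + 1) = 9 * (q * q) + 9 * q + 2 := by ring
    rw [hexp] at h2
    generalize q * q = Q at h2
    omega
  · obtain ⟨q, rfl⟩ : ∃ q, k = 3 * q + 2 := ⟨k / 3, by omega⟩
    have hexp : (3 * q + 2) * (3 * q + 2 + 1) = 9 * (q * q) + 15 * q + 6 := by ring
    rw [hexp] at h2
    generalize q * q = Q at h2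
    omega

lemma tri_one_mod3 (k m : ℕ) (h : k * (k + 1) / 2 = 3 * m + 1) : k % 3 = 1 := by
  have h2 : k * (k + 1) = 2 * (3 * m + 1) := by rw [← h, two_mul_tri]
  rcases (by omega : k % 3 = 0 ∨ k % 3 = 1 ∨ k % 3 = 2) with h0 | h0 | h0
  · exfalso
    obtain ⟨q, rfl⟩ : ∃ q, k = 3 * q := ⟨k / 3, by omega⟩
    have hexp : 3 * q * (3 * q + 1) = 9 * (q * q) + 3 * q := by ring
    rw [hexp] at h2
    generalize q * q = Q at h2
    omega
  · exact h0
  · exfalso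
    obtain ⟨q, rfl⟩ : ∃ q, k = 3 * q + 2 := ⟨k / 3, by omega⟩
    have hexp : (3 * q + 2) * (3 * q + 2 + 1) = 9 * (q * q) + 15 * q + 6 := by ring
    rw [hexp] at h2
    generalize q * q = Q at h2
    omega

lemma tri_3j1 (j : ℕ) : (3 * j + 1) * ((3 * j + 1) + 1) / 2 = 9 * (j * (j + 1) / 2) + 1 := by
  have h1 := two_mul_tri (3 * j + 1)
  have h2 := two_mul_tri j
  have : (3 * j + 1) * ((3 * j + 1) + 1) = 9 * (j * (j + 1)) + 2 := by ring
  omega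


open scoped Classical

noncomputable def Wser : PowerSeries ℤ :=
  PowerSeries.mk fun m => (-1) ^ m * (if ∃ k, k * (k + 1) / 2 = 3 * m then 1 else 0)

lemma coeff_psiNeg (n : ℕ) :
    coeff n psiNeg = (-1) ^ n * (if ∃ k, k * (k + 1) / 2 = n then 1 else 0) := by
  rw [psiNeg, coeff_mk, psiSub, coeff_mk]
  simp only [one_mul]

lemma coeff_Wser (m : ℕ) :
    coeff m Wser = (-1) ^ m * (if ∃ k, k * (k + 1) / 2 = 3 * m then 1 else 0) := by
  rw [Wser, coeff_mk]

lemma dissect : psiNeg = sg Wser - X * sg (sg psiNeg) := by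
  ext n
  rw [map_sub, coeff_psiNeg]
  rcases (by omega : n % 3 = 0 ∨ n % 3 = 1 ∨ n % 3 = 2) with h0 | h0 | h0
  · obtain ⟨m, rfl⟩ : ∃ m, n = 3 * m := ⟨n / 3, by omega⟩
    rw [coeff_sg_mul3, coeff_Wser]
    have hx : coeff (3 * m) (X * sg (sg psiNeg)) = 0 := by
      cases m with
      | zero => simp
      | succ l =>
        rw [show 3 * (l + 1) = (3 * l + 2) + 1 by ring, coeff_succ_X_mul, coeff_sg,
          if_neg (by omega)]
    rw [hx, sub_zero, show ((-1 : ℤ)) ^ (3 * m) = (-1) ^ m by rw [pow_mul]; norm_num]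
  · obtain ⟨m, rfl⟩ : ∃ m, n = 3 * m + 1 := ⟨n / 3, by omega⟩
    rw [coeff_sg, if_neg (show ¬ (3 ∣ 3 * m + 1) by omega), coeff_succ_X_mul, coeff_sg_mul3,
      coeff_sg]
    by_cases h3 : 3 ∣ m
    · obtain ⟨j, rfl⟩ := h3
      rw [if_pos (show (3:ℕ) ∣ 3 * j from ⟨j, rfl⟩), Nat.mul_div_cancel_left _ (by norm_num),
        coeff_psiNeg]
      have hiff : (∃ k, k * (k + 1) / 2 = 3 * (3 * j) + 1) ↔ (∃ k, k * (k + 1) / 2 = j) := by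
        constructor
        · rintro ⟨k, hk⟩
          have h1 := tri_one_mod3 k (3 * j) hk
          obtain ⟨k', rfl⟩ : ∃ k', k = 3 * k' + 1 := ⟨k / 3, by omega⟩
          rw [tri_3j1] at hk
          exact ⟨k', by omega⟩
        · rintro ⟨k', hk'⟩
          exact ⟨3 * k' + 1, by rw [tri_3j1, hk']; ring⟩
      simp only [hiff]
      have hsign : ((-1 : ℤ)) ^ (3 * (3 * j) + 1) = -((-1) ^ j) := by
        rw [pow_succ, pow_mul, pow_mul]; norm_num
      rw [hsign]; ring
    · rw [if_neg h3]
      have hnone : ¬∃ k, k * (k + 1) / 2 = 3 * m + 1 := by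
        rintro ⟨k, hk⟩
        have h1 := tri_one_mod3 k m hk
        obtain ⟨k', rfl⟩ : ∃ k', k = 3 * k' + 1 := ⟨k / 3, by omega⟩
        rw [tri_3j1] at hk
        exact h3 ⟨k' * (k' + 1) / 2, by omega⟩
      rw [if_neg hnone]
      ring
  · obtain ⟨m, rfl⟩ : ∃ m, n = 3 * m + 2 := ⟨n / 3, by omega⟩
    rw [if_neg (show ¬ ∃ k, k * (k + 1) / 2 = 3 * m + 2 from
        fun h => by obtain ⟨k, hk⟩ := h; exact tri_ne_two_mod3 k m hk), mul_zero,
      coeff_sg, if_neg (show ¬ (3 ∣ 3 * m + 2) by omega),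
      show 3 * m + 2 = (3 * m + 1) + 1 by ring, coeff_succ_X_mul,
      coeff_sg, if_neg (show ¬ (3 ∣ 3 * m + 1) by omega)]
    ring

noncomputable def Dser : PowerSeries ℤ := Wser ^ 3 - X * sg (psiNeg ^ 3)

noncomputable def Dinv : PowerSeries ℤ := PowerSeries.invOfUnit Dser 1

noncomputable def Gser : PowerSeries ℤ := PowerSeries.invOfUnit psiNeg 1

lemma constCoeff_psiNeg : constantCoeff psiNeg = 1 := by
  rw [← coeff_zero_eq_constantCoeff_apply, coeff_psiNeg, if_pos ⟨0, rfl⟩]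
  norm_num

lemma constCoeff_Wser : constantCoeff Wser = 1 := by
  rw [← coeff_zero_eq_constantCoeff_apply, coeff_Wser, if_pos ⟨0, rfl⟩]
  norm_num

lemma constCoeff_Dser : constantCoeff Dser = 1 := by
  rw [Dser, map_sub, map_pow, constCoeff_Wser, map_mul, constantCoeff_X]
  norm_num

lemma hPG : psiNeg * Gser = 1 :=
  PowerSeries.mul_invOfUnit _ 1 (by rw [constCoeff_psiNeg, Units.val_one])

lemma hDDi : Dser * Dinv = 1 :=
  PowerSeries.mul_invOfUnit _ 1 (by rw [constCoeff_Dser, Units.val_one])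

lemma inv_unique {f u v : PowerSeries ℤ} (hu : f * u = 1) (hv : f * v = 1) : u = v := by
  calc u = u * (f * v) := by rw [hv, mul_one]
    _ = v * (f * u) := by ring
    _ = v := by rw [hu, mul_one]

lemma sg_Dser : sg Dser = (sg Wser) ^ 3 - X ^ 3 * (sg (sg psiNeg)) ^ 3 := by
  rw [Dser, sg_sub, sg_pow, sg_X_mul, sg_pow, sg_pow]

lemma hPN : psiNeg * ((sg Wser) ^ 2 + sg Wser * (X * sg (sg psiNeg))
    + (X * sg (sg psiNeg)) ^ 2) = sg Dser := by
  rw [sg_Dser]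
  nth_rewrite 1 [dissect]
  ring

lemma hG : Gser = ((sg Wser) ^ 2 + sg Wser * (X * sg (sg psiNeg))
    + (X * sg (sg psiNeg)) ^ 2) * sg Dinv :=
  inv_unique hPG (by rw [← mul_assoc, hPN, ← sg_mul, hDDi, sg_one])

lemma hGexp : Gser = sg (Wser ^ 2 * Dinv) + X * sg ((Wser * sg psiNeg) * Dinv)
    + X ^ 2 * sg (sg (psiNeg ^ 2) * Dinv) := by
  rw [hG, sg_mul, sg_mul, sg_mul, sg_mul, sg_pow, sg_pow, sg_pow]
  ring

lemma hT2G : T 2 Gser = sg (psiNeg ^ 2) * Dinv := by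
  rw [hGexp, T_add, T_add, T2_sg, T2_X_sg, T2_X2_sg]
  ring

lemma hG3exp : Gser ^ 3 = sg ((Wser ^ 6) * Dinv ^ 3)
    + C 3 * (X * sg ((Wser ^ 5 * sg psiNeg) * Dinv ^ 3))
    + C 6 * (X ^ 2 * sg ((Wser ^ 4 * sg (psiNeg ^ 2)) * Dinv ^ 3))
    + C 7 * (X ^ 3 * sg ((Wser ^ 3 * sg (psiNeg ^ 3)) * Dinv ^ 3))
    + C 6 * (X ^ 4 * sg ((Wser ^ 2 * sg (psiNeg ^ 4)) * Dinv ^ 3))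
    + C 3 * (X ^ 5 * sg ((Wser * sg (psiNeg ^ 5)) * Dinv ^ 3))
    + X ^ 6 * sg (sg (psiNeg ^ 6) * Dinv ^ 3) := by
  rw [hG]
  simp only [sg_mul, sg_pow, map_ofNat]
  ring

lemma hT2G3 : T 2 (Gser ^ 3) = C 3 * (C 2 * (Wser ^ 4 * sg (psiNeg ^ 2) * Dinv ^ 3)
    + X * (Wser * sg (psiNeg ^ 5) * Dinv ^ 3)) := by
  rw [hG3exp, T_add, T_add, T_add, T_add, T_add, T_add, T_C_mul, T_C_mul, T_C_mul, T_C_mul,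
    T_C_mul, T2_sg, T2_X_sg, T2_X2_sg, T2_X3_sg, T2_X4_sg, T2_X5_sg, T2_X6_sg,
    show (C 6 : PowerSeries ℤ) = C 3 * C 2 by rw [← map_mul]; norm_num]
  ring

section ZMod3

lemma zmodA (w p d e : PowerSeries (ZMod 3))
    (hp1 : p = sg w - X * sg (sg p))
    (hd : d = w ^ 3 - X * sg (p ^ 3))
    (hde : d * e = 1) :
    T 1 (sg (p ^ 2) * e) = w * sg p * p ^ 2 * e := by
  have hdp : d = p := by rw [hd, frob w, frob p, ← hp1]
  have hpe : p * e = 1 := by rw [← hdp]; exact hde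
  have hsgde : d ^ 3 * sg e = 1 := by rw [frob d, ← sg_mul, hde, sg_one]
  have he : e = d ^ 2 * sg e := by
    calc e = e * (d ^ 3 * sg e) := by rw [hsgde, mul_one]
      _ = d ^ 2 * sg e * (d * e) := by ring
      _ = d ^ 2 * sg e := by rw [hde, mul_one]
  have hstep : sg (p ^ 2) * e = sg (w ^ 2 * (p ^ 2 * e))
      + X * sg ((w * sg p) * (p ^ 2 * e)) + X ^ 2 * sg (sg (p ^ 2) * (p ^ 2 * e)) := by
    simp only [sg_mul, sg_pow]
    linear_combination ((sg p) ^ 2) * he + ((sg p) ^ 2 * sg e * (d + p)) * hdp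
      + ((sg p) ^ 2 * sg e * (p + sg w - X * sg (sg p))) * hp1
      + (-((sg p) ^ 2 * sg e * X * sg w * sg (sg p))) * three_eq_zero
  rw [hstep, T_add, T_add, T1_sg, T1_X_sg, T1_X2_sg]
  ring

lemma zmodC (w p d e : PowerSeries (ZMod 3))
    (hp1 : p = sg w - X * sg (sg p))
    (hd : d = w ^ 3 - X * sg (p ^ 3))
    (hde : d * e = 1) :
    C 2 * (w ^ 4 * sg (p ^ 2) * e ^ 3) + X * (w * sg (p ^ 5) * e ^ 3)
      = C 2 * (w * sg p * p ^ 2 * e) := by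
  have hdp : d = p := by rw [hd, frob w, frob p, ← hp1]
  have hpe : p * e = 1 := by rw [← hdp]; exact hde
  have hC2 : (C 2 : PowerSeries (ZMod 3)) = 2 := map_ofNat _ 2
  have step1 : (2 : PowerSeries (ZMod 3)) * (w ^ 4 * sg (p ^ 2)) + X * (w * sg (p ^ 5))
      = 2 * (w * (sg p * p ^ 4)) := by
    rw [sg_pow, sg_pow]
    linear_combination (2 * w * (sg p) ^ 2) * (frob w) + (X * w * (sg p) ^ 2) * (frob (sg p))
      + (-(2 * w * sg p * p)) * (frob p) + (-(2 * w * (sg p) ^ 2)) * hp1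
      + (X * w * (sg p) ^ 2 * sg (sg p)) * three_eq_zero
  rw [hC2]
  linear_combination (e ^ 3) * step1
    + (2 * w * sg p * p ^ 2 * e * (p * e + 1)) * hpe

end ZMod3

section Assembly

noncomputable def m3 : PowerSeries ℤ →+* PowerSeries (ZMod 3) :=
  PowerSeries.map (Int.castRingHom (ZMod 3))

lemma eq_three_mul_of_map_zero (A : PowerSeries ℤ) (h : m3 A = 0) :
    ∃ Y : PowerSeries ℤ, A = C 3 * Y := by
  refine ⟨PowerSeries.mk fun n => coeff n A / 3, ?_⟩
  ext n
  rw [coeff_C_mul, coeff_mk]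
  have h3 : (3 : ℤ) ∣ coeff n A := by
    have h1 := congrArg (coeff n) h
    rw [m3, coeff_map, map_zero] at h1
    have h2 := (ZMod.intCast_zmod_eq_zero_iff_dvd (coeff n A) 3).1 h1
    exact_mod_cast h2
  exact (Int.mul_ediv_cancel' h3).symm

lemma key : ∃ Y : PowerSeries ℤ,
    T 2 (Gser ^ 3) = C 6 * T 1 (T 2 Gser) + C 9 * Y := by
  set w : PowerSeries (ZMod 3) := m3 Wser with hw
  set p : PowerSeries (ZMod 3) := m3 psiNeg with hp
  set d : PowerSeries (ZMod 3) := m3 Dser with hd0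
  set e : PowerSeries (ZMod 3) := m3 Dinv with he0
  have hm3sg : ∀ f : PowerSeries ℤ, m3 (sg f) = sg (m3 f) := fun f => sg_map _ f
  have hm3T : ∀ r (f : PowerSeries ℤ), m3 (T r f) = T r (m3 f) := fun r f => T_map _ r f
  have hm3X : m3 X = X := PowerSeries.map_X _
  have hp1 : p = sg w - X * sg (sg p) := by
    rw [hp, hw]
    nth_rewrite 1 [dissect]
    rw [map_sub, map_mul, hm3X, hm3sg, hm3sg, hm3sg]
  have hd1 : d = w ^ 3 - X * sg (p ^ 3) := by
    rw [hd0, hw, hp, Dser, map_sub, map_pow, map_mul, hm3X, hm3sg, map_pow]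
  have hde : d * e = 1 := by rw [hd0, he0, ← map_mul, hDDi, map_one]
  -- image of T 1 (T 2 Gser)
  have hT2Gm : m3 (T 2 Gser) = sg (p ^ 2) * e := by
    rw [hT2G, map_mul, hm3sg, map_pow]
  have hA : m3 (T 1 (T 2 Gser)) = w * sg p * p ^ 2 * e := by
    rw [hm3T, hT2Gm]
    exact zmodA w p d e hp1 hd1 hde
  -- the divisible-by-3 part
  have hzero : m3 (C 2 * (Wser ^ 4 * sg (psiNeg ^ 2) * Dinv ^ 3)
      + X * (Wser * sg (psiNeg ^ 5) * Dinv ^ 3) - C 2 * T 1 (T 2 Gser)) = 0 := by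
    have hC2 : m3 (C 2) = C 2 := by
      rw [m3, PowerSeries.map_C, map_ofNat]
    rw [map_sub, map_add]
    simp only [map_mul, map_pow, hm3X, hm3sg, hC2, hA]
    linear_combination zmodC w p d e hp1 hd1 hde
  obtain ⟨Y, hY⟩ := eq_three_mul_of_map_zero _ hzero
  refine ⟨Y, ?_⟩
  rw [hT2G3]
  have h6 : (C 6 : PowerSeries ℤ) = C 3 * C 2 := by rw [← map_mul]; norm_num
  have h9 : (C 9 : PowerSeries ℤ) = C 3 * C 3 := by rw [← map_mul]; norm_num
  rw [h6, h9]
  linear_combination (C 3) * hY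

end Assembly

end PodAux

theorem pod3_pod_relation_mod_nine (n : ℕ) :
    Int.ModEq 9 (pod3 (3 * n + 2)) (6 * pod1 (9 * n + 5)) := by
  obtain ⟨Y, hY⟩ := PodAux.key
  have hG3 : PowerSeries.invOfUnit (psiNeg ^ 3) 1 = PodAux.Gser ^ 3 := by
    refine PodAux.inv_unique (PowerSeries.mul_invOfUnit _ 1 ?_) ?_
    · rw [map_pow, PodAux.constCoeff_psiNeg, Units.val_one, one_pow]
    · rw [show psiNeg ^ 3 * PodAux.Gser ^ 3 = (psiNeg * PodAux.Gser) ^ 3 by ring,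
        PodAux.hPG, one_pow]
  have h := congrArg (PowerSeries.coeff n) hY
  rw [PodAux.coeff_T, map_add, PowerSeries.coeff_C_mul, PowerSeries.coeff_C_mul,
    PodAux.coeff_T, PodAux.coeff_T, show 3 * (3 * n + 1) + 2 = 9 * n + 5 by ring] at h
  have h1 : pod3 (3 * n + 2) = PowerSeries.coeff (3 * n + 2) (PodAux.Gser ^ 3) := by
    rw [pod3, hG3]
  have h2 : pod1 (9 * n + 5) = PowerSeries.coeff (9 * n + 5) PodAux.Gser := rfl
  rw [← h1, ← h2] at h
  have hdvd : (9 : ℤ) ∣ 6 * pod1 (9 * n + 5) - pod3 (3 * n + 2) :=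
    ⟨-(PowerSeries.coeff n Y), by linarith⟩
  exact Int.modEq_iff_dvd.mpr hdvd
end
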